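/- Let B be a bicategory, and let G' : a ⟶ b and G'' : b ⟶ c be 1-morphisms. Suppose (H', ε') is a weak right adjoint of G', suppose (H'', ε'') is a weak right adjoint of G'', and suppose additionally that H'' : c ⟶ b admits an honest right adjoint I'' : b ⟶ c in B. Then the pair consisting of H'' ≫ H' : c ⟶ a together with the composed counit (obtained by contracting first with ε' and then with ε'') is a weak right adjoint of the composite G' ≫ G'' : a ⟶ c. -/

import Mathlib

open CategoryTheory Bicategory

section MateAux

universe w v u
variable {B : Type u} [Bicategory.{w, v} B] {a b c : B} {f : c ⟶ b} {g : b ⟶ c}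

/-- The hom-set equivalence induced by an adjunction in a bicategory. -/
def bimateEquiv (adj : f ⊣ g) (J : c ⟶ a) (K : b ⟶ a) :
    (J ⟶ f ≫ K) ≃ (g ≫ J ⟶ K) where
  toFun θ := g ◁ θ ≫ (α_ g f K).inv ≫ adj.counit ▷ K ≫ (λ_ K).hom
  invFun τ := (λ_ J).inv ≫ adj.unit ▷ J ≫ (α_ f g J).hom ≫ f ◁ τ
  left_inv θ := by
    calc
      _ = 𝟙 _ ⊗≫ (adj.unit ▷ J ≫ (f ≫ g) ◁ θ) ⊗≫ f ◁ adj.counit ▷ K ⊗≫ 𝟙 _ := by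
        bicategory
      _ = 𝟙 _ ⊗≫ θ ⊗≫ (leftZigzag adj.unit adj.counit) ▷ K ⊗≫ 𝟙 _ := by
        rw [← whisker_exchange]; bicategory
      _ = θ := by
        rw [adj.left_triangle]; bicategory
  right_inv τ := by
    calc
      _ = 𝟙 _ ⊗≫ g ◁ adj.unit ▷ J ⊗≫ ((g ≫ f) ◁ τ ≫ adj.counit ▷ K) ⊗≫ 𝟙 _ := by
        bicategory
      _ = 𝟙 _ ⊗≫ (rightZigzag adj.unit adj.counit) ▷ J ⊗≫ τ ⊗≫ 𝟙 _ := by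
        rw [whisker_exchange]; bicategory
      _ = τ := by
        rw [adj.right_triangle]; bicategory

lemma bimateEquiv_apply (adj : f ⊣ g) (J : c ⟶ a) (K : b ⟶ a) (θ : J ⟶ f ≫ K) :
    bimateEquiv adj J K θ =
      g ◁ θ ≫ (α_ g f K).inv ≫ adj.counit ▷ K ≫ (λ_ K).hom := rfl

lemma bimateEquiv_symm_apply (adj : f ⊣ g) (J : c ⟶ a) (K : b ⟶ a) (τ : g ≫ J ⟶ K) :
    (bimateEquiv adj J K).symm τ =
      (λ_ J).inv ≫ adj.unit ▷ J ≫ (α_ f g J).hom ≫ f ◁ τ := rfl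

end MateAux

/-- A pair `(H, ε)` is a weak right adjoint of `G : a ⟶ b` if for every `J : b ⟶ a`,
the map `θ ↦ (θ ▷ G) ≫ ε` is a bijection from 2-morphisms `J ⟶ H` to 2-morphisms
`J ≫ G ⟶ 𝟙 b`. -/
def IsWeakRightAdjoint {B : Type*} [Bicategory B] {a b : B} (G : a ⟶ b)
    (H : b ⟶ a) (ε₀ : H ≫ G ⟶ 𝟙 b) : Prop :=
  ∀ J : b ⟶ a, Function.Bijective (fun θ : J ⟶ H => (θ ▷ G) ≫ ε₀)

/-- If `(H', ε')` and `(H'', ε'')` are weak right adjoints of `G'` and `G''` respectively,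
and `H''` admits an honest right adjoint `I''` in the bicategory, then
`(H'' ≫ H', ε''')` is a weak right adjoint of `G' ≫ G''`, where `ε'''` is the composed
counit obtained by contracting first with `ε'` and then with `ε''`. -/
theorem weak_right_adjoint_comp_of_coadjoint {B : Type*} [Bicategory B] {a b c : B}
    (G' : a ⟶ b) (G'' : b ⟶ c) (H' : b ⟶ a) (H'' : c ⟶ b) (I'' : b ⟶ c)
    (ε' : H' ≫ G' ⟶ 𝟙 b) (hH' : IsWeakRightAdjoint G' H' ε')
    (ε'' : H'' ≫ G'' ⟶ 𝟙 c) (hH'' : IsWeakRightAdjoint G'' H'' ε'')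
    (adj : H'' ⊣ I'') :
    IsWeakRightAdjoint (G' ≫ G'') (H'' ≫ H')
      ((α_ H'' H' (G' ≫ G'')).hom ≫
        H'' ◁ ((α_ H' G' G'').inv ≫ (ε' ▷ G'') ≫ (λ_ G'').hom) ≫ ε'') := by
  intro J
  -- the five maps whose composite is the map in question
  set e₁ : (J ⟶ H'' ≫ H') → (I'' ≫ J ⟶ H') := ⇑(bimateEquiv adj J H') with he₁
  set e₂ : (I'' ≫ J ⟶ H') → ((I'' ≫ J) ≫ G' ⟶ 𝟙 b) :=
    fun ψ => (ψ ▷ G') ≫ ε' with he₂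
  set e₃ : ((I'' ≫ J) ≫ G' ⟶ 𝟙 b) → (J ≫ G' ⟶ H'') :=
    fun χ => ((bimateEquiv adj (J ≫ G') (𝟙 b)).symm ((α_ I'' J G').inv ≫ χ)) ≫ (ρ_ H'').hom
    with he₃
  set e₄ : (J ≫ G' ⟶ H'') → ((J ≫ G') ≫ G'' ⟶ 𝟙 c) :=
    fun ψ => (ψ ▷ G'') ≫ ε'' with he₄
  set e₅ : ((J ≫ G') ≫ G'' ⟶ 𝟙 c) → (J ≫ (G' ≫ G'') ⟶ 𝟙 c) :=
    fun φ => (α_ J G' G'').inv ≫ φ with he₅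
  have key : (fun θ : J ⟶ H'' ≫ H' =>
      (θ ▷ (G' ≫ G'')) ≫ (α_ H'' H' (G' ≫ G'')).hom ≫
        H'' ◁ ((α_ H' G' G'').inv ≫ (ε' ▷ G'') ≫ (λ_ G'').hom) ≫ ε'')
      = e₅ ∘ e₄ ∘ e₃ ∘ e₂ ∘ e₁ := by
    funext θ
    simp only [he₁, he₂, he₃, he₄, he₅, Function.comp_apply, bimateEquiv_apply,
      bimateEquiv_symm_apply]
    symm
    calc
      _ = 𝟙 _ ⊗≫ (adj.unit ▷ J ≫ (H'' ≫ I'') ◁ θ) ▷ (G' ≫ G'') ⊗≫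
            H'' ◁ adj.counit ▷ (H' ≫ G' ≫ G'') ⊗≫ H'' ◁ (ε' ▷ G'') ⊗≫ ε'' := by
        bicategory
      _ = 𝟙 _ ⊗≫ θ ▷ (G' ≫ G'') ⊗≫
            (leftZigzag adj.unit adj.counit) ▷ (H' ≫ G' ≫ G'') ⊗≫
            H'' ◁ (ε' ▷ G'') ⊗≫ ε'' := by
        rw [← whisker_exchange]; bicategory
      _ = _ := by
        rw [adj.left_triangle]; bicategory
  rw [key]
  exact (((Iso.homFromEquiv (α_ J G' G'')).bijective).comp
    ((hH'' (J ≫ G')).comp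
      ((((Iso.homToEquiv (ρ_ H'')).bijective).comp
        (((bimateEquiv adj (J ≫ G') (𝟙 b)).symm.bijective).comp
          (Iso.homFromEquiv (α_ I'' J G')).bijective)).comp
        ((hH' (I'' ≫ J)).comp
          (bimateEquiv adj J H').bijective))))
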